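/- Every triangle-free uniquely (k+1)-colorable graph (with k ≥ 2) is uniquely k-list colorable. -/

import Mathlib

/-- A coloring `c` of the vertices is proper if adjacent vertices get different colors. -/
def IsProperColoring {V α : Type*} (G : SimpleGraph V) (c : V → α) : Prop :=
  ∀ ⦃u w⦄, G.Adj u w → c u ≠ c w

/-- `c` is an `L`-coloring of `G`: a proper coloring with `c v ∈ L v` for every vertex `v`. -/
def IsListColoring {V : Type*} (G : SimpleGraph V) (L : V → Finset ℕ) (c : V → ℕ) : Prop :=
  IsProperColoring G c ∧ ∀ v, c v ∈ L v

/-- `G` is uniquely `f`-list colorable: there is a list assignment giving each vertex `v`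
a list of exactly `f v` colors, from which `G` has exactly one list coloring. -/
def UniquelyFListColorable {V : Type*} (G : SimpleGraph V) (f : V → ℕ) : Prop :=
  ∃ L : V → Finset ℕ, (∀ v, (L v).card = f v) ∧ ∃! c, IsListColoring G L c

/-- `G` is uniquely `k`-list colorable. -/
def UniquelyKListColorable {V : Type*} (G : SimpleGraph V) (k : ℕ) : Prop :=
  UniquelyFListColorable G (fun _ => k)

/-- The m-number of `G`: the least `k` for which `G` is not uniquely `k`-list colorable. -/
noncomputable def mNumber {V : Type*} (G : SimpleGraph V) : ℕ :=
  sInf {k | ¬ UniquelyKListColorable G k}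

/-- Every triangle-free uniquely `(k+1)`-colorable graph (`k ≥ 2`) is
uniquely `k`-list colorable. -/
theorem triangleFree_uniquely_colorable_implies_UkLC
    {V : Type} [Fintype V] (G : SimpleGraph V) (k : ℕ) (hk : 2 ≤ k)
    (htf : G.CliqueFree 3)
    (hchrom : G.chromaticNumber = (k + 1 : ℕ))
    (hunique : ∀ c₁ c₂ : V → Fin (k + 1), IsProperColoring G c₁ → IsProperColoring G c₂ →
      ∀ u w, c₁ u = c₁ w ↔ c₂ u = c₂ w) :
    UniquelyKListColorable G k := by
  classical
  -- A (k+1)-coloring exists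
  have hcol : G.Colorable (k + 1) := by
    rw [← SimpleGraph.chromaticNumber_le_iff_colorable, hchrom]
  -- but no k-coloring
  have hncol : ¬ G.Colorable k := by
    intro h
    have h1 := h.chromaticNumber_le
    rw [hchrom] at h1
    exact absurd (by exact_mod_cast h1 : k + 1 ≤ k) (Nat.not_succ_le_self k)
  obtain ⟨C⟩ := hcol
  set c : V → Fin (k + 1) := fun v => C v with hc_def
  have hc : IsProperColoring G c := fun u w h => C.valid h
  -- every class is nonempty
  have hne : ∀ i : Fin (k + 1), ∃ v, c v = i := by
    intro i
    by_contra h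
    push_neg at h
    have hcard : Fintype.card {j : Fin (k + 1) // j ≠ i} = k := by
      simp [Fintype.card_subtype_compl]
    have col : G.Colorable k := by
      have := (SimpleGraph.Coloring.mk (G := G)
        (fun v => (⟨c v, h v⟩ : {j : Fin (k + 1) // j ≠ i}))
        (fun {u w} huw heq => hc huw (by simpa [Subtype.ext_iff] using heq))).colorable
      rwa [hcard] at this
    exact hncol col
  -- every vertex has a neighbor in every other class
  have hnbr : ∀ v (i : Fin (k + 1)), i ≠ c v → ∃ w, G.Adj v w ∧ c w = i := by
    intro v i hiv
    by_contra h
    push_neg at h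
    set c' : V → Fin (k + 1) := Function.update c v i with hc'def
    have hc' : IsProperColoring G c' := by
      intro a b hab heq
      by_cases ha : a = v
      · have hbv : b ≠ v := fun hbv => G.irrefl (ha ▸ hbv ▸ hab)
        rw [hc'def, ha] at heq
        rw [Function.update_self, Function.update_of_ne hbv] at heq
        exact h b (ha ▸ hab) heq.symm
      · by_cases hb : b = v
        · rw [hc'def, hb] at heq
          rw [Function.update_of_ne ha, Function.update_self] at heq
          exact h a (G.adj_symm (hb ▸ hab)) heq
        · rw [hc'def, Function.update_of_ne ha, Function.update_of_ne hb] at heq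
          exact hc hab heq
    obtain ⟨u, hu⟩ := hne i
    have huv : u ≠ v := fun h' => hiv (h' ▸ hu).symm
    have key := hunique c c' hc hc' v u
    have : c' v = c' u := by
      rw [hc'def]
      simp [Function.update_self, Function.update_of_ne huv, hu]
    have : c v = c u := key.mpr this
    rw [hu] at this
    exact hiv this.symm
  -- each class has at least k vertices
  have hbig : ∀ i : Fin (k + 1), k ≤ (Finset.univ.filter (fun v => c v = i)).card := by
    intro i
    by_contra h
    push_neg at h
    -- choose a neighbor in class i for each vertex not in class i
    have hch : ∀ v, c v ≠ i → ∃ w, G.Adj v w ∧ c w = i := fun v hv => hnbr v i (Ne.symm hv)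
    set Ci := Finset.univ.filter (fun v => c v = i) with hCi
    let nb : ∀ v, c v ≠ i → {x // x ∈ Ci} := fun v hv =>
      ⟨(hch v hv).choose, by
        simp only [hCi, Finset.mem_filter, Finset.mem_univ, true_and]
        exact (hch v hv).choose_spec.2⟩
    have hnb : ∀ v (hv : c v ≠ i), G.Adj v (nb v hv : V) := fun v hv => (hch v hv).choose_spec.1
    set d : V → Option {x // x ∈ Ci} := fun v => if hv : c v = i then none else some (nb v hv)
      with hd_def
    have hd : IsProperColoring G d := by
      intro a b hab heq
      rw [hd_def] at heq
      by_cases ha : c a = i <;> by_cases hb : c b = i <;> simp [ha, hb] at heq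
      · exact hc hab (ha.trans hb.symm)
      · -- both map to the same neighbor: triangle
        have hwa := hnb a ha
        have hwb := hnb b hb
        rw [heq] at hwa
        exact htf {a, b, (nb b hb : V)}
          (SimpleGraph.is3Clique_triple_iff.2 ⟨hab, hwa, hwb⟩)
    have hcard : Fintype.card (Option {x // x ∈ Ci}) ≤ k := by
      rw [Fintype.card_option, Fintype.card_coe]
      omega
    exact hncol (((SimpleGraph.Coloring.mk d fun {u w} h => hd h).colorable).mono hcard)
  -- embeddings of {i+1, ..., k} into class i
  have e : ∀ i : Fin (k + 1),
      ({x // x ∈ Finset.Ioc i.val k} ↪ {x // x ∈ Finset.univ.filter (fun v => c v = i)}) := by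
    intro i
    refine Classical.choice (Function.Embedding.nonempty_of_card_le ?_)
    rw [Fintype.card_coe, Fintype.card_coe, Nat.card_Ioc]
    exact le_trans (Nat.sub_le _ _) (hbig i)
  -- the forbidden color of each vertex
  set F : Fin (k + 1) → V → ℕ := fun i v =>
    if i.val = k then 0
    else if h2 : ∃ b : {x // x ∈ Finset.Ioc i.val k}, ((e i b : V) = v) then (h2.choose : ℕ)
    else i.val + 1 with hF_def
  set m : V → ℕ := fun v => F (c v) v with hm_def
  -- m v lies in Ioc (c v) k when c v ≠ k, and equals 0 when c v = k
  have hmv : ∀ v, m v = F (c v) v := fun _ => rfl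
  have hmIoc : ∀ v, (c v).val ≠ k → m v ∈ Finset.Ioc (c v).val k := by
    intro v hv
    rw [hmv v]
    simp only [hF_def]
    rw [if_neg hv]
    split
    · next h2 => exact h2.choose.2
    · next => simp only [Finset.mem_Ioc]
              have := (c v).isLt
              omega
  have hmk : ∀ v, (c v).val = k → m v = 0 := by
    intro v hv
    rw [hmv v]
    simp only [hF_def]
    rw [if_pos hv]
  have hm_range : ∀ v, m v ∈ Finset.range (k + 1) := by
    intro v
    by_cases hv : (c v).val = k
    · rw [hmk v hv]; simp
    · have := hmIoc v hv
      rw [Finset.mem_Ioc] at this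
      rw [Finset.mem_range]
      omega
  have hm_ne : ∀ v, (c v).val ≠ m v := by
    intro v
    by_cases hv : (c v).val = k
    · rw [hmk v hv, hv]; omega
    · have := hmIoc v hv
      rw [Finset.mem_Ioc] at this
      omega
  -- surjectivity of m onto Ioc i k on class i
  have hm_surj : ∀ i : Fin (k + 1), i.val ≠ k → ∀ b ∈ Finset.Ioc i.val k,
      ∃ v, c v = i ∧ m v = b := by
    intro i hik b hb
    have hcv : c (e i ⟨b, hb⟩ : V) = i := by
      have := (e i ⟨b, hb⟩).2
      rw [Finset.mem_filter] at this
      exact this.2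
    refine ⟨(e i ⟨b, hb⟩ : V), hcv, ?_⟩
    rw [hmv _, hcv]
    simp only [hF_def]
    rw [if_neg hik]
    have h2 : ∃ b' : {x // x ∈ Finset.Ioc i.val k}, ((e i b' : V) = (e i ⟨b, hb⟩ : V)) :=
      ⟨⟨b, hb⟩, rfl⟩
    rw [dif_pos h2]
    have hsp := h2.choose_spec
    have : h2.choose = ⟨b, hb⟩ := (e i).injective (Subtype.ext hsp)
    rw [this]
  -- the list assignment
  refine ⟨fun v => (Finset.range (k + 1)).erase (m v), fun v => ?_, ?_⟩
  · rw [Finset.card_erase_of_mem (hm_range v), Finset.card_range]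
    simp
  refine ⟨fun v => (c v).val, ⟨fun u w h => ?_, fun v => ?_⟩, ?_⟩
  · intro heq
    exact hc h (Fin.ext heq)
  · exact Finset.mem_erase.2 ⟨hm_ne v, by simp [(c v).isLt]⟩
  · -- uniqueness
    rintro d ⟨hdp, hdL⟩
    have hd_lt : ∀ v, d v < k + 1 := fun v =>
      Finset.mem_range.1 (Finset.mem_of_mem_erase (hdL v))
    set d' : V → Fin (k + 1) := fun v => ⟨d v, hd_lt v⟩ with hd'_def
    have hd' : IsProperColoring G d' := by
      intro u w h heq
      exact hdp h (congrArg Fin.val heq)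
    have key := hunique d' c hd' hc
    have main : ∀ n, ∀ v, (c v).val = n → d v = n := by
      intro n
      induction n using Nat.strong_induction_on with
      | _ n ih =>
        intro v hv
        have hub : d v ≤ n := by
          by_cases hn : n = k
          · have := hd_lt v; omega
          · by_contra hgt
            push_neg at hgt
            have hmem : d v ∈ Finset.Ioc (c v).val k := by
              rw [Finset.mem_Ioc, hv]
              exact ⟨hgt, by have := hd_lt v; omega⟩
            obtain ⟨u, hu, hmu⟩ := hm_surj (c v) (by rw [hv]; exact hn) (d v) hmem
            have : c v = c u := hu.symm
            have hdvu : d v = d u := congrArg Fin.val ((key v u).mpr this)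
            have := Finset.mem_erase.1 (hdL u)
            rw [hmu] at this
            exact this.1 hdvu.symm
        rcases Nat.lt_or_ge (d v) n with hlt | hge
        · exfalso
          have hnk : d v < k + 1 := hd_lt v
          obtain ⟨u, hu⟩ := hne ⟨d v, hnk⟩
          have hdu : d u = d v := ih (d v) (by omega) u (by rw [hu])
          have : d' v = d' u := by
            rw [hd'_def]
            exact Fin.ext (by simp [hdu])
          have hcvu : c v = c u := (key v u).mp this
          rw [hu] at hcvu
          have : (c v).val = d v := by rw [hcvu]
          omega
        · omega
    exact funext fun v => main (c v).val v rfl
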